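/- arXiv:1502.06262 — 2 statements merged into one kernel-verified Lean document; each statement's English description precedes it below -/
import Mathlib

section
/- For every M ∈ ℕ, the M-th higher block code Ξ^(M) : Σ_A → Σ_{A^(M)} is continuous. -/
namespace OTW

/-- The Ott-Tomforde-Willis full shift `Σ_A`: sequences over `A ∪ {õ}` (with `õ = none`)
such that once the empty letter `õ` appears, it repeats forever. -/
@[ext]
structure FullShift (A : Type*) where
  val : ℕ → Option A
  tail : ∀ i, val i = none → val (i + 1) = none

variable {A B : Type*}

/-- The shift map `σ`. -/
def shiftMap (x : FullShift A) : FullShift A :=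
  ⟨fun i => x.val (i + 1), fun i hi => x.tail (i + 1) hi⟩

/-- The empty sequence `Ø`. -/
def emptySeq : FullShift A :=
  ⟨fun _ => none, fun _ _ => rfl⟩

theorem val_none_mono (x : FullShift A) :
    ∀ {k m : ℕ}, k ≤ m → x.val k = none → x.val m = none := by
  intro k m h hk
  induction m, h using Nat.le_induction with
  | base => exact hk
  | succ m hm ih => exact x.tail m ih

/-- The finite sequence determined by a word `w : List A`. -/
def finSeq (w : List A) : FullShift A where
  val i := (w.drop i).head?
  tail := by
    intro i hi
    rw [List.head?_eq_none_iff] at hi ⊢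
    rw [List.drop_eq_nil_iff] at hi ⊢
    omega

/-- Generalized cylinder `Z(w, F)`. -/
def Zcyl (w : List A) (F : Finset A) : Set (FullShift A) :=
  {x | (∀ i : Fin w.length, x.val i = some (w.get i)) ∧ ∀ a ∈ F, x.val w.length ≠ some a}

/-- The topology on `Σ_A` generated by the generalized cylinders. -/
instance : TopologicalSpace (FullShift A) :=
  TopologicalSpace.generateFrom {S | ∃ (w : List A) (F : Finset A), S = Zcyl w F}

/-- The letters `L_Λ` used by sequences of `Λ`. -/
def letters (Λ : Set (FullShift A)) : Set A :=
  {a | ∃ x ∈ Λ, ∃ i, x.val i = some a}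

/-- `w` is a (fully lettered) block appearing in some sequence of `Λ`. -/
def IsBlock (Λ : Set (FullShift A)) (w : List A) : Prop :=
  ∃ x ∈ Λ, ∃ n, ∀ i : Fin w.length, x.val (n + i) = some (w.get i)

/-- Ott-Tomforde-Willis shift space: closed, shift invariant, with the
infinite extension property. -/
def IsShiftSpace (Λ : Set (FullShift A)) : Prop :=
  IsClosed Λ ∧ (∀ x ∈ Λ, shiftMap x ∈ Λ) ∧
    (emptySeq ∈ Λ ↔ (letters Λ).Infinite) ∧
    (∀ w : List A, w ≠ [] → (finSeq w ∈ Λ ↔ {b : A | IsBlock Λ (w ++ [b])}.Infinite))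

/-- `x` begins with the block `b` (a word over the extended alphabet `A ∪ {õ}`). -/
def Prefixed (x : FullShift A) (b : List (Option A)) : Prop :=
  ∀ i : Fin b.length, x.val i = b.get i

/-- `(P, Q)` is a representation of `C` as a finitely defined set in `Λ`:
membership in `C` is witnessed by an initial block in `P`, and membership in the
complement by an initial block in `Q`. -/
def FDRep (Λ C : Set (FullShift A)) (P Q : Set (List (Option A))) : Prop :=
  (∀ b ∈ P, b ≠ []) ∧ (∀ b ∈ Q, b ≠ []) ∧
    C = {x ∈ Λ | ∃ b ∈ P, Prefixed x b} ∧
    Λ \ C = {x ∈ Λ | ∃ b ∈ Q, Prefixed x b}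

/-- `C` is a finitely defined set in `Λ`. -/
def FinitelyDefinedIn (Λ C : Set (FullShift A)) : Prop :=
  ∃ P Q, FDRep Λ C P Q

/-- `S` is a finite (possibly empty) union of generalized cylinders of `Λ`. -/
def IsFinUnionCyl (Λ S : Set (FullShift A)) : Prop :=
  ∃ (n : ℕ) (w : Fin n → List A) (F : Fin n → Finset A),
    S = Λ ∩ ⋃ i, Zcyl (w i) (F i)

/-- `Φ` is the sliding block code determined by the partition `{C_a}` of `Λ` into
finitely defined sets, with `C_õ` shift invariant. -/
def IsSBCWith (Λ : Set (FullShift A)) (Φ : FullShift A → FullShift B)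
    (C : Option B → Set (FullShift A)) : Prop :=
  (∀ a, C a ⊆ Λ) ∧ (∀ x ∈ Λ, ∃! a, x ∈ C a) ∧
    (∀ a, FinitelyDefinedIn Λ (C a)) ∧
    (∀ x ∈ C none, shiftMap x ∈ C none) ∧
    (∀ x ∈ Λ, ∀ n : ℕ, shiftMap^[n] x ∈ C ((Φ x).val n))

/-- Sliding block code. -/
def IsSlidingBlockCode (Λ : Set (FullShift A)) (Φ : FullShift A → FullShift B) : Prop :=
  ∃ C, IsSBCWith Λ Φ C

/-- Row-finite shift: every letter has a finite follower set. -/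
def RowFinite (Λ : Set (FullShift A)) : Prop :=
  ∀ a ∈ letters Λ, {b : A | IsBlock Λ [a, b]}.Finite

/-- The `M`-th higher block code `Ξ^(M)`. -/
noncomputable def higherBlock (M : ℕ) (x : FullShift A) : FullShift (Fin M → A) where
  val i := if h : ∀ j : Fin M, (x.val (i + j)).isSome then
      some (fun j => (x.val (i + j)).get (h j)) else none
  tail := by
    intro i hi
    try dsimp only at hi ⊢
    have h1 : ¬ ∀ j : Fin M, (x.val (i + j)).isSome := by
      intro h
      rw [dif_pos h] at hi
      exact absurd hi (by simp)
    push_neg at h1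
    obtain ⟨j, hj⟩ := h1
    have hjn : x.val (i + j) = none := Option.not_isSome_iff_eq_none.mp hj
    have hM : (0 : ℕ) < M := j.pos
    rw [dif_neg]
    intro h2
    have hsome := h2 ⟨M - 1, by omega⟩
    have hnone : x.val (i + 1 + ((⟨M - 1, by omega⟩ : Fin M) : ℕ)) = none := by
      apply val_none_mono x ?_ hjn
      have := j.isLt
      simp only [Fin.val_mk]
      omega
    rw [hnone] at hsome
    simp at hsome


theorem isOpen_Zcyl (w : List A) (F : Finset A) : IsOpen (Zcyl w F) :=
  TopologicalSpace.isOpen_generateFrom_of_mem ⟨w, F, rfl⟩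

/-- the `M`-th higher block code `Ξ^(M) : Σ_A → Σ_{A^(M)}` is
continuous. -/
theorem higherBlock_continuous {A : Type*} [Countable A] [Infinite A]
    (M : ℕ) (hM : 0 < M) :
    Continuous (higherBlock M : FullShift A → FullShift (Fin M → A)) := by
  classical
  apply continuous_generateFrom_iff.mpr
  rintro S ⟨w, F, rfl⟩
  rw [isOpen_iff_forall_mem_open]
  intro x hx
  obtain ⟨hx1, hx2⟩ := hx
  set n := w.length with hn
  -- coordinates of x below n + M - 1 are pinned by w
  have hco : ∀ i : Fin n, ∀ j : Fin M, x.val (↑i + ↑j) = some (w.get i j) := by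
    intro i j
    have h := hx1 i
    simp only [higherBlock, Set.mem_preimage] at h
    by_cases hc : ∀ j : Fin M, (x.val (↑i + ↑j)).isSome
    · rw [dif_pos hc] at h
      have h2 := congrFun (Option.some.inj h) j
      rw [← h2]
      exact (Option.some_get (hc j)).symm
    · rw [dif_neg hc] at h; exact absurd h (by simp)
  -- a cut length L : all coordinates below L are `some`, and L is maximal ≤ n+M
  have hLex : ∃ L, L ≤ n + M ∧ (∀ k, k < L → (x.val k).isSome) ∧
      (L < n + M → x.val L = none) := by
    by_cases hall : ∀ k, k < n + M → (x.val k).isSome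
    · exact ⟨n + M, le_refl _, fun k hk => hall k hk, fun h => absurd h (lt_irrefl _)⟩
    · push_neg at hall
      obtain ⟨k, hk, hknone⟩ := hall
      have hex : ∃ m, x.val m = none := ⟨k, Option.not_isSome_iff_eq_none.mp hknone⟩
      refine ⟨Nat.find hex, ?_, ?_, fun _ => Nat.find_spec hex⟩
      · exact le_trans (Nat.find_le (Option.not_isSome_iff_eq_none.mp hknone)) (le_of_lt hk)
      · intro m hm
        have := Nat.find_min hex hm
        exact Option.ne_none_iff_isSome.mp this
  obtain ⟨hLle, hL2, hL3⟩ := hLex.choose_spec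
  set L := hLex.choose with hLdef
  have hLbig : 1 ≤ n → n + M - 1 ≤ L := by
    intro hn1
    by_contra hc
    push_neg at hc
    have hnone := hL3 (by omega)
    have hi : min L (n - 1) < n := by omega
    have hj : L - min L (n - 1) < M := by omega
    have h := hco ⟨min L (n - 1), hi⟩ ⟨L - min L (n - 1), hj⟩
    simp only [Fin.val_mk] at h
    rw [show min L (n - 1) + (L - min L (n - 1)) = L from by omega, hnone] at h
    exact absurd h (by simp)
  have hLge_n : n ≤ L := by
    rcases Nat.eq_zero_or_pos n with h | h
    · omega
    · have := hLbig h; omega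
  -- the cylinder word and forbidden set
  have hsome : ∀ i : Fin L, (x.val ↑i).isSome := fun i => hL2 i i.isLt
  set p : List A := List.ofFn (fun i : Fin L => (x.val ↑i).get (hsome i)) with hpdef
  have hp : p.length = L := List.length_ofFn
  have hpget : ∀ i : Fin p.length, x.val ↑i = some (p.get i) := by
    intro i
    have hi : (i : ℕ) < L := by rw [← hp]; exact i.isLt
    have h2 : p.get i = (x.val ↑i).get (hsome ⟨i, hi⟩) := by
      simp only [hpdef, List.get_eq_getElem, List.getElem_ofFn]
    rw [h2, Option.some_get]
  set G : Finset A := if L < n + M then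
      F.image (fun a => a ⟨min (L - n) (M - 1), by omega⟩) else ∅ with hGdef
  refine ⟨Zcyl p G, ?_, isOpen_Zcyl p G, ?_, ?_⟩
  · -- containment
    rintro y ⟨hy1, hy2⟩
    have hyx : ∀ k, k < L → y.val k = x.val k := by
      intro k hk
      have h := hy1 ⟨k, by rw [hp]; exact hk⟩
      rw [h]
      exact (hpget ⟨k, by rw [hp]; exact hk⟩).symm
    constructor
    · intro i
      have hij : ∀ j : Fin M, y.val (↑i + ↑j) = some (w.get i j) := by
        intro j
        have hlt : (↑i : ℕ) + ↑j < L := by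
          have h1 := hLbig (by have := i.isLt; omega)
          have h2 := i.isLt; have h3 := j.isLt; omega
        rw [hyx _ hlt]; exact hco i j
      have hsome' : ∀ j : Fin M, (y.val (↑i + ↑j)).isSome := fun j => by
        rw [hij j]; rfl
      simp only [higherBlock]
      rw [dif_pos hsome']
      refine congrArg some (funext fun j => ?_)
      simp only [hij j, Option.get_some]
    · intro a ha hcontra
      simp only [higherBlock] at hcontra
      by_cases hc : ∀ j : Fin M, (y.val (n + ↑j)).isSome
      · rw [dif_pos hc] at hcontra
        have hya : ∀ j : Fin M, y.val (n + ↑j) = some (a j) := by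
          intro j
          rw [← congrFun (Option.some.inj hcontra) j]
          exact (Option.some_get (hc j)).symm
        have hxa : ¬ ∀ j : Fin M, x.val (n + ↑j) = some (a j) := by
          intro h
          apply hx2 a ha
          simp only [higherBlock, Set.mem_preimage]
          have hs : ∀ j : Fin M, (x.val (n + ↑j)).isSome := fun j => by rw [h j]; rfl
          rw [dif_pos hs]
          exact congrArg some (funext fun j => by simp only [h j, Option.get_some])
        by_cases hLlt : L < n + M
        · have hjL : L - n < M := by omega
          have hmin : min (L - n) (M - 1) = L - n := by omega
          have hmem : a ⟨min (L - n) (M - 1), by omega⟩ ∈ G := by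
            rw [hGdef, if_pos hLlt]
            exact Finset.mem_image_of_mem _ ha
          apply hy2 _ hmem
          rw [hp]
          have h := hya ⟨min (L - n) (M - 1), by omega⟩
          rwa [show n + ((⟨min (L - n) (M - 1), by omega⟩ : Fin M) : ℕ) = L from by
            simp only [Fin.val_mk]; omega] at h
        · apply hxa
          intro j
          rw [← hyx (n + ↑j) (by have := j.isLt; omega)]
          exact hya j
      · rw [dif_neg hc] at hcontra; exact absurd hcontra (by simp)
  · -- membership: prefix condition
    exact hpget
  · -- membership: forbidden letters
    intro a ha hcontra
    have hLlt : L < n + M := by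
      by_contra h
      rw [hGdef, if_neg h] at ha
      exact absurd ha (Finset.notMem_empty a)
    rw [hp, hL3 hLlt] at hcontra
    exact absurd hcontra (by simp)

end OTW
end

section
/- Let Λ ⊆ Σ_A be a shift space and Ξ^(M) its M-th higher block code, with Λ* = {x ∈ Λ : l(x) ≥ M}. Then the following are equivalent: (1) every finite sequence in Λ has length < M; (2) Λ* contains no nonempty finite sequences; (3) the inverse of Ξ^(M)|_{Λ*} : Λ* → Λ^(M) is a sliding block code. -/
namespace OTW

variable {A B : Type*}

theorem iterShift_val (n : ℕ) (x : FullShift A) (i : ℕ) :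
    (shiftMap^[n] x).val i = x.val (n + i) := by
  induction n generalizing x with
  | zero => simp
  | succ n ih =>
    rw [Function.iterate_succ_apply, ih]
    show x.val (n + i + 1) = x.val (n + 1 + i)
    congr 1; omega

theorem hb_comm (M n : ℕ) (x : FullShift A) :
    shiftMap^[n] (higherBlock M x) = higherBlock M (shiftMap^[n] x) := by
  apply FullShift.ext; funext i
  rw [iterShift_val]
  show (higherBlock M x).val (n + i) = (higherBlock M (shiftMap^[n] x)).val i
  simp only [higherBlock]
  have h : ∀ m, (shiftMap^[n] x).val m = x.val (n + m) := fun m => iterShift_val n x m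
  simp only [h, ← Nat.add_assoc]

theorem iterShift_mem {Λ : Set (FullShift A)} (hΛ : ∀ x ∈ Λ, shiftMap x ∈ Λ)
    {x : FullShift A} (hx : x ∈ Λ) (n : ℕ) : shiftMap^[n] x ∈ Λ := by
  induction n with
  | zero => exact hx
  | succ n ih => rw [Function.iterate_succ_apply']; exact hΛ _ ih

/-- for `Λ* = {x ∈ Λ : l(x) ≥ M}`, the following are equivalent:
(1) every finite sequence of `Λ` has length `< M`; (2) `Λ*` contains no nonempty
finite sequence; (3) the inverse of `Ξ^(M)|_{Λ*}` is a sliding block code. -/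
theorem higherBlock_inverse_slidingBlockCode_iff {A : Type*} [Countable A] [Infinite A]
    (M : ℕ) (hM : 0 < M) (Λ : Set (FullShift A)) (hΛ : IsShiftSpace Λ) :
    ((∀ x ∈ Λ, (∃ k, x.val k = none) → x.val (M - 1) = none) ↔
      (∀ x ∈ {x ∈ Λ | ∀ j < M, x.val j ≠ none}, (∃ k, x.val k = none) → x = emptySeq)) ∧
    ((∀ x ∈ {x ∈ Λ | ∀ j < M, x.val j ≠ none}, (∃ k, x.val k = none) → x = emptySeq) ↔
      (∃ Ψ : FullShift (Fin M → A) → FullShift A,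
        (∀ x ∈ {x ∈ Λ | ∀ j < M, x.val j ≠ none}, Ψ (higherBlock M x) = x) ∧
        IsSlidingBlockCode (higherBlock M '' {x ∈ Λ | ∀ j < M, x.val j ≠ none}) Ψ)) := by
  set Λs := {x ∈ Λ | ∀ j < M, x.val j ≠ none} with hΛsdef
  constructor
  · constructor
    · rintro h1 x hx ⟨k, hk⟩
      exact absurd (h1 x hx.1 ⟨k, hk⟩) (hx.2 (M - 1) (by omega))
    · rintro h2 x hx ⟨k, hk⟩
      by_contra hne
      have hx' : x ∈ Λs := ⟨hx, fun j hj hjn => hne (val_none_mono x (by omega) hjn)⟩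
      have := h2 x hx' ⟨k, hk⟩
      rw [this] at hne
      exact hne rfl
  constructor
  · intro h2
    have hinf : ∀ x ∈ Λs, ∀ i, (x.val i).isSome := by
      intro x hx i
      rw [Option.isSome_iff_ne_none]
      intro hn
      have hxe := h2 x hx ⟨i, hn⟩
      exact hx.2 0 hM (by rw [hxe]; rfl)
    refine ⟨fun y => ⟨fun i => (y.val i).map (fun f => f ⟨0, hM⟩), ?_⟩, ?_, ?_⟩
    · intro i hi
      rw [Option.map_eq_none_iff] at hi ⊢
      exact y.tail i hi
    · -- inverse property
      intro x hx
      apply FullShift.ext; funext i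
      have hs : (higherBlock M x).val i
          = some (fun j : Fin M => (x.val (i + j)).get (hinf x hx _)) := by
        simp only [higherBlock]
        exact dif_pos fun j : Fin M => hinf x hx (i + j)
      show ((higherBlock M x).val i).map (fun f => f ⟨0, hM⟩) = x.val i
      rw [hs, Option.map_some]
      have : i + ((⟨0, hM⟩ : Fin M) : ℕ) = i := by simp
      simp only [this]
      exact Option.some_get _
    · -- sliding block code
      refine ⟨fun o => {y ∈ higherBlock M '' Λs |
          (y.val 0).map (fun f => f ⟨0, hM⟩) = o}, fun o y hy => hy.1, ?_, ?_, ?_, ?_⟩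
      · intro y hy
        exact ⟨(y.val 0).map (fun f => f ⟨0, hM⟩), ⟨hy, rfl⟩, fun a ha => ha.2.symm⟩
      · intro o
        refine ⟨{b | ∃ o', b = [o'] ∧ o'.map (fun f => f ⟨0, hM⟩) = o},
          {b | ∃ o', b = [o'] ∧ o'.map (fun f => f ⟨0, hM⟩) ≠ o}, ?_, ?_, ?_, ?_⟩
        · rintro b ⟨o', rfl, -⟩; simp
        · rintro b ⟨o', rfl, -⟩; simp
        · ext y
          constructor
          · rintro ⟨hy, hmap⟩
            refine ⟨hy, [y.val 0], ⟨y.val 0, rfl, hmap⟩, ?_⟩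
            rintro ⟨i, hi⟩
            obtain rfl : i = 0 := by simpa using hi
            rfl
          · rintro ⟨hy, b, ⟨o', rfl, hmap⟩, hpre⟩
            have h0 := hpre ⟨0, by simp⟩
            refine ⟨hy, ?_⟩
            have h0' : y.val 0 = o' := by simpa using h0
            rw [h0']; exact hmap
        · ext y
          constructor
          · rintro ⟨hy, hc⟩
            have hmap : (y.val 0).map (fun f => f ⟨0, hM⟩) ≠ o := fun h => hc ⟨hy, h⟩
            refine ⟨hy, [y.val 0], ⟨y.val 0, rfl, hmap⟩, ?_⟩
            rintro ⟨i, hi⟩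
            obtain rfl : i = 0 := by simpa using hi
            rfl
          · rintro ⟨hy, b, ⟨o', rfl, hmap⟩, hpre⟩
            have h0 := hpre ⟨0, by simp⟩
            refine ⟨hy, fun hc => ?_⟩
            have h0' : y.val 0 = o' := by simpa using h0
            exact hmap (by rw [← h0']; exact hc.2)
      · -- C none shift invariant
        rintro y ⟨hy, hm⟩
        rw [Option.map_eq_none_iff] at hm
        have hall : ∀ i, y.val i = none := fun i => val_none_mono y (Nat.zero_le i) hm
        have hsy : shiftMap y = y := by
          apply FullShift.ext; funext i
          show y.val (i + 1) = y.val i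
          rw [hall, hall]
        rw [hsy]
        exact ⟨hy, by rw [hm]; rfl⟩
      · -- the coding condition
        rintro y ⟨x, hx, rfl⟩ n
        have hxn : shiftMap^[n] x ∈ Λs := by
          refine ⟨iterShift_mem hΛ.2.1 hx.1 n, fun j hj hn => ?_⟩
          rw [iterShift_val] at hn
          exact Option.isSome_iff_ne_none.mp (hinf x hx _) hn
        constructor
        · rw [hb_comm]
          exact ⟨shiftMap^[n] x, hxn, rfl⟩
        · show ((shiftMap^[n] (higherBlock M x)).val 0).map _ = _
          rw [iterShift_val, Nat.add_zero]
  · rintro ⟨Ψ, hinv, C, hsub, hexu, hfd, hshift, hcode⟩ x hx ⟨k, hk⟩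
    exfalso
    have hy : higherBlock M x ∈ higherBlock M '' Λs := ⟨x, hx, rfl⟩
    have h1 := hcode _ hy k
    have hemp : shiftMap^[k] (higherBlock M x) = emptySeq := by
      apply FullShift.ext; funext i
      rw [iterShift_val]
      show (higherBlock M x).val (k + i) = none
      simp only [higherBlock]
      rw [dif_neg]
      intro h
      have hsome := h ⟨M - 1, by omega⟩
      have hnone : x.val (k + i + ((⟨M - 1, by omega⟩ : Fin M) : ℕ)) = none :=
        val_none_mono x (by simp; omega) hk
      rw [hnone] at hsome
      simp at hsome
    rw [hemp] at h1
    obtain ⟨x', hx', hx'e⟩ := hsub _ h1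
    have h0 : (higherBlock M x').val 0 = none := by rw [hx'e]; rfl
    have hpos : (higherBlock M x').val 0
        = some (fun j : Fin M => (x'.val (0 + j)).get (Option.isSome_iff_ne_none.mpr
            (hx'.2 (0 + j) (by simpa using j.isLt)))) := by
      simp only [higherBlock]
      exact dif_pos fun j : Fin M =>
        Option.isSome_iff_ne_none.mpr (hx'.2 (0 + j) (by simpa using j.isLt))
    rw [h0] at hpos
    exact absurd hpos (by simp)

end OTW
end
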